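/- arXiv:2303.15328 — 2 statements merged into one kernel-verified Lean document; each statement's English description precedes it below -/
import Mathlib

section
/- Let h : [0,1] → [0,1] be a Lebesgue-measure-preserving bijection with measurable measure-preserving inverse. Define Ω√2 = {(x,y) ∈ (0,1)² : h(x) ≤ y and h⁻¹(y) ≤ x}, Ω₀ = {(x,y) ∈ (0,1)² : h(x) > y and h⁻¹(y) > x}, and Ω₁ = (0,1)² \ (Ω√2 ∪ Ω₀). Then λ₂(Ω₁) = 1 − 2·λ₂(Ω√2). -/
open MeasureTheory Set

instance unitInterval.volume_noAtoms : NullSingletonClass (volume : Measure unitInterval) := by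
  constructor
  intro x
  rw [Measure.Subtype.volume_def, Measure.comap_apply _ Subtype.val_injective
    (fun s hs => MeasurableSet.subtype_image measurableSet_Icc hs) _ (measurableSet_singleton x)]
  simp

lemma graph_null (f : unitInterval → unitInterval) (hf : Measurable f) :
    volume {p : unitInterval × unitInterval | p.2 = f p.1} = 0 := by
  have hm : MeasurableSet {p : unitInterval × unitInterval | p.2 = f p.1} :=
    (measurable_snd.prodMk (hf.comp measurable_fst)) isClosed_diagonal.measurableSet
  rw [show (volume : Measure (unitInterval × unitInterval)) =
      (volume : Measure unitInterval).prod volume from rfl, Measure.prod_apply hm]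
  have : ∀ x : unitInterval, (volume : Measure unitInterval)
      (Prod.mk x ⁻¹' {p : unitInterval × unitInterval | p.2 = f p.1}) = 0 := by
    intro x
    have : Prod.mk x ⁻¹' {p : unitInterval × unitInterval | p.2 = f p.1} = {f x} := by
      ext y; simp [Set.mem_preimage]
    rw [this, measure_singleton]
  simp [this]

lemma vline_null (c : unitInterval) :
    volume {p : unitInterval × unitInterval | p.1 = c} = 0 := by
  have : {p : unitInterval × unitInterval | p.1 = c} = ({c} : Set unitInterval) ×ˢ univ := by
    ext p
    simp only [Set.mem_setOf_eq, Set.mem_prod, Set.mem_singleton_iff, Set.mem_univ, and_true]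
  rw [this, show (volume : Measure (unitInterval × unitInterval)) =
      (volume : Measure unitInterval).prod volume from rfl, Measure.prod_prod,
    measure_singleton, zero_mul]

lemma hline_null (c : unitInterval) :
    volume {p : unitInterval × unitInterval | p.2 = c} = 0 :=
  graph_null (fun _ => c) measurable_const

/-- For a measure-preserving bijection `h` of `[0,1]` with measurable measure-preserving
inverse `g`, the set `Ω₁ = (0,1)² \ (Ω√2 ∪ Ω₀)` satisfies
`λ₂(Ω₁) = 1 - 2 λ₂(Ω√2)`. -/
theorem stmt_5 (h g : unitInterval → unitInterval)
    (hbij : Function.Bijective h)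
    (hmp : MeasurePreserving h volume volume)
    (hgl : Function.LeftInverse g h) (hgr : Function.RightInverse g h)
    (hgmeas : Measurable g) (hgmp : MeasurePreserving g volume volume) :
    (volume ({p : unitInterval × unitInterval | 0 < p.1 ∧ p.1 < 1 ∧ 0 < p.2 ∧ p.2 < 1} \
        ({p : unitInterval × unitInterval |
            (0 < p.1 ∧ p.1 < 1 ∧ 0 < p.2 ∧ p.2 < 1) ∧ h p.1 ≤ p.2 ∧ g p.2 ≤ p.1} ∪
         {p : unitInterval × unitInterval |
            (0 < p.1 ∧ p.1 < 1 ∧ 0 < p.2 ∧ p.2 < 1) ∧ p.2 < h p.1 ∧ p.1 < g p.2}))).toReal =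
    1 - 2 * (volume {p : unitInterval × unitInterval |
        (0 < p.1 ∧ p.1 < 1 ∧ 0 < p.2 ∧ p.2 < 1) ∧ h p.1 ≤ p.2 ∧ g p.2 ≤ p.1}).toReal := by
  have hhm : Measurable h := hmp.measurable
  set S : Set (unitInterval × unitInterval) :=
    {p | 0 < p.1 ∧ p.1 < 1 ∧ 0 < p.2 ∧ p.2 < 1} with hS
  set A : Set (unitInterval × unitInterval) :=
    {p | (0 < p.1 ∧ p.1 < 1 ∧ 0 < p.2 ∧ p.2 < 1) ∧ h p.1 ≤ p.2 ∧ g p.2 ≤ p.1} with hA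
  set B : Set (unitInterval × unitInterval) :=
    {p | (0 < p.1 ∧ p.1 < 1 ∧ 0 < p.2 ∧ p.2 < 1) ∧ p.2 < h p.1 ∧ p.1 < g p.2} with hB
  -- measurability
  have m1 : MeasurableSet {p : unitInterval × unitInterval | 0 < p.1} :=
    measurableSet_lt measurable_const measurable_fst
  have m2 : MeasurableSet {p : unitInterval × unitInterval | p.1 < 1} :=
    measurableSet_lt measurable_fst measurable_const
  have m3 : MeasurableSet {p : unitInterval × unitInterval | 0 < p.2} :=
    measurableSet_lt measurable_const measurable_snd
  have m4 : MeasurableSet {p : unitInterval × unitInterval | p.2 < 1} :=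
    measurableSet_lt measurable_snd measurable_const
  have hSm : MeasurableSet S := by
    refine MeasurableSet.congr (m1.inter (m2.inter (m3.inter m4))) ?_
    ext p; simp only [hS, Set.mem_inter_iff, Set.mem_setOf_eq]; try tauto
  have hAm : MeasurableSet A := by
    refine MeasurableSet.congr (hSm.inter
      ((measurableSet_le ((hhm.comp measurable_fst :
          Measurable fun p : unitInterval × unitInterval => h p.1)) measurable_snd).inter
      (measurableSet_le ((hgmeas.comp measurable_snd :
          Measurable fun p : unitInterval × unitInterval => g p.2)) measurable_fst))) ?_
    ext p; simp only [hA, hS, Set.mem_inter_iff, Set.mem_setOf_eq]; try tauto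
  have hBm : MeasurableSet B := by
    refine MeasurableSet.congr (hSm.inter
      ((measurableSet_lt measurable_snd ((hhm.comp measurable_fst :
          Measurable fun p : unitInterval × unitInterval => h p.1))).inter
      (measurableSet_lt measurable_fst ((hgmeas.comp measurable_snd :
          Measurable fun p : unitInterval × unitInterval => g p.2))))) ?_
    ext p; simp only [hB, hS, Set.mem_inter_iff, Set.mem_setOf_eq]; try tauto
  -- the measure-preserving map φ(x,y) = (g y, h x)
  have hφ : MeasurePreserving (fun p : unitInterval × unitInterval => (g p.2, h p.1))
      volume volume := by
    have := (hgmp.prod hmp).comp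
      (Measure.measurePreserving_swap (μ := (volume : Measure unitInterval))
        (ν := (volume : Measure unitInterval)))
    exact this
  -- the preimage of A under φ
  set A' : Set (unitInterval × unitInterval) :=
    {p | (0 < g p.2 ∧ g p.2 < 1 ∧ 0 < h p.1 ∧ h p.1 < 1) ∧ p.2 ≤ h p.1 ∧ p.1 ≤ g p.2} with hA'
  have hpre : (fun p : unitInterval × unitInterval => (g p.2, h p.1)) ⁻¹' A = A' := by
    ext p
    simp only [hA, hA', Set.mem_preimage, Set.mem_setOf_eq, hgr p.2, hgl p.1]
  have hμA' : volume A' = volume A := by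
    rw [← hpre, hφ.measure_preimage hAm.nullMeasurableSet]
  -- the null set collecting all boundary and graph pieces
  have hgraph2 : {p : unitInterval × unitInterval | p.1 = g p.2} =
      {p : unitInterval × unitInterval | p.2 = h p.1} := by
    ext p
    constructor
    · intro hp; simp only [Set.mem_setOf_eq] at *; rw [hp, hgr p.2]
    · intro hp; simp only [Set.mem_setOf_eq] at *; rw [hp, hgl p.1]
  set N : Set (unitInterval × unitInterval) :=
    {p | p.1 = 0} ∪ {p | p.2 = 0} ∪ {p | p.2 = h 1} ∪ {p | p.1 = g 1} ∪
    {p | p.2 = h p.1} ∪ {p | p.1 = g p.2} with hNdef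
  have hN : volume N = 0 := by
    refine measure_union_null (measure_union_null (measure_union_null (measure_union_null
      (measure_union_null ?_ ?_) ?_) ?_) ?_) ?_
    · exact vline_null 0
    · exact hline_null 0
    · exact hline_null (h 1)
    · exact vline_null (g 1)
    · exact graph_null h hhm
    · rw [hgraph2]; exact graph_null h hhm
  have key0 : ∀ x : unitInterval, x ≠ 0 → 0 < x := fun x hx =>
    lt_of_le_of_ne unitInterval.nonneg' (Ne.symm hx)
  have key1 : ∀ x : unitInterval, x ≠ 1 → x < 1 := fun x hx =>
    lt_of_le_of_ne unitInterval.le_one' hx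
  -- B =ᵐ A'
  have hBA' : volume B = volume A' := by
    refine measure_congr (MeasureTheory.measure_symmDiff_eq_zero_iff.1
      (measure_mono_null ?_ hN))
    rw [Set.symmDiff_def]
    rintro p (⟨hpB, hpA'⟩ | ⟨hpA', hpB⟩)
    · -- B \ A' : forced g p.2 = 1 or h p.1 = 1
      obtain ⟨⟨hx0, hx1, hy0, hy1⟩, hyh, hxg⟩ := hpB
      by_cases hg1 : g p.2 = 1
      · have : p.2 = h 1 := by rw [← hg1, hgr p.2]
        simp only [hNdef, Set.mem_union, Set.mem_setOf_eq]; try tauto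
      by_cases hh1 : h p.1 = 1
      · have : p.1 = g 1 := by rw [← hh1, hgl p.1]
        simp only [hNdef, Set.mem_union, Set.mem_setOf_eq]; try tauto
      exfalso
      exact hpA' ⟨⟨lt_trans hx0 hxg, key1 _ hg1, lt_trans hy0 hyh, key1 _ hh1⟩,
        le_of_lt hyh, le_of_lt hxg⟩
    · -- A' \ B : forced boundary or graph membership
      obtain ⟨⟨hg0, hg1, hh0, hh1⟩, hyh, hxg⟩ := hpA'
      by_cases hx0 : p.1 = 0
      · simp only [hNdef, Set.mem_union, Set.mem_setOf_eq]; try tauto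
      by_cases hy0 : p.2 = 0
      · simp only [hNdef, Set.mem_union, Set.mem_setOf_eq]; try tauto
      by_cases hgr1 : p.2 = h p.1
      · simp only [hNdef, Set.mem_union, Set.mem_setOf_eq]; try tauto
      by_cases hgr2 : p.1 = g p.2
      · simp only [hNdef, Set.mem_union, Set.mem_setOf_eq]; try tauto
      exfalso
      exact hpB ⟨⟨key0 _ hx0, lt_of_le_of_lt hxg hg1, key0 _ hy0, lt_of_le_of_lt hyh hh1⟩,
        lt_of_le_of_ne hyh hgr1, lt_of_le_of_ne hxg hgr2⟩
  have hμB : volume B = volume A := by rw [hBA', hμA']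
  -- volume S = 1
  have hμS : volume S = 1 := by
    have hSuniv : volume S = volume (Set.univ : Set (unitInterval × unitInterval)) := by
      refine measure_congr (MeasureTheory.measure_symmDiff_eq_zero_iff.1
        (measure_mono_null ?_ (measure_union_null (measure_union_null
          (measure_union_null (vline_null 0) (vline_null 1)) (hline_null 0)) (hline_null 1))))
      rw [Set.symmDiff_def]
      rintro p (⟨_, hpu⟩ | ⟨_, hpS⟩)
      · exact absurd (Set.mem_univ p) hpu
      · by_cases hx0 : p.1 = 0
        · simp only [Set.mem_union, Set.mem_setOf_eq]; try tauto
        by_cases hx1 : p.1 = 1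
        · simp only [Set.mem_union, Set.mem_setOf_eq]; try tauto
        by_cases hy0 : p.2 = 0
        · simp only [Set.mem_union, Set.mem_setOf_eq]; try tauto
        by_cases hy1 : p.2 = 1
        · simp only [Set.mem_union, Set.mem_setOf_eq]; try tauto
        exact absurd ⟨key0 _ hx0, key1 _ hx1, key0 _ hy0, key1 _ hy1⟩ hpS
    rw [hSuniv, measure_univ]
  -- disjointness and inclusion
  have hdisj : Disjoint A B := by
    rw [Set.disjoint_left]
    rintro p ⟨_, hyh, _⟩ ⟨_, hyh', _⟩
    exact absurd hyh (not_le.2 hyh')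
  have hsub : A ∪ B ⊆ S := by
    rintro p (⟨hp, _⟩ | ⟨hp, _⟩) <;> exact hp
  have hAB : volume (A ∪ B) = volume A + volume A := by
    rw [measure_union hdisj hBm, hμB]
  have hdiff : volume (S \ (A ∪ B)) = volume S - volume (A ∪ B) :=
    measure_diff hsub (hAm.union hBm).nullMeasurableSet (measure_ne_top _ _)
  have hle : volume A + volume A ≤ 1 := by
    rw [← hAB, ← hμS]; exact measure_mono hsub
  have hfin : volume A ≠ ⊤ := measure_ne_top _ _
  rw [hdiff, hμS, hAB, ENNReal.toReal_sub_of_le hle ENNReal.one_ne_top, ENNReal.toReal_one,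
    ENNReal.toReal_add hfin hfin]
  ring
end

section
/- Let h : [0,1] → [0,1] be a Lebesgue-measure-preserving bijection with measurable measure-preserving inverse. Then ∫_{[0,1]²} √(𝟙_{[0,y]}(h(x)) + 𝟙_{[0,x]}(h⁻¹(y)) + 1) dλ₂(x,y) = √2 − (2√2 − 1 − √3)·λ₂(Ω√2), where Ω√2 = {(x,y) ∈ (0,1)² : h(x) ≤ y and h⁻¹(y) ≤ x}. -/
open MeasureTheory Set

lemma stmt_8_vol_singleton (a : unitInterval) : volume ({a} : Set unitInterval) = 0 := by
  rw [unitInterval.volume_def, Measure.comap_apply _ Subtype.val_injective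
    (fun s hs => (MeasurableEmbedding.subtype_coe measurableSet_Icc).measurableSet_image.2 hs) _
    (measurableSet_singleton a)]
  simp

lemma stmt_8_graph_null (f : unitInterval → unitInterval) (hf : Measurable f) :
    (volume : Measure (unitInterval × unitInterval)) {p | p.2 = f p.1} = 0 := by
  have hG : MeasurableSet {p : unitInterval × unitInterval | p.2 = f p.1} := by
    have : {p : unitInterval × unitInterval | p.2 = f p.1} =
        {p : unitInterval × unitInterval | p.2 ≤ f p.1} ∩ {p | f p.1 ≤ p.2} := by
      ext p; constructor
      · intro hp; exact ⟨le_of_eq hp, le_of_eq hp.symm⟩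
      · rintro ⟨h1, h2⟩; exact le_antisymm h1 h2
    rw [this]
    exact (measurableSet_le measurable_snd (hf.comp measurable_fst)).inter
      (measurableSet_le (hf.comp measurable_fst) measurable_snd)
  rw [show (volume : Measure (unitInterval × unitInterval)) =
      (volume : Measure unitInterval).prod volume from rfl, Measure.prod_apply hG]
  have : ∀ x : unitInterval, (Prod.mk x ⁻¹' {p : unitInterval × unitInterval | p.2 = f p.1})
      = {f x} := by
    intro x; ext y; simp [Set.mem_preimage, Set.mem_singleton_iff]
  simp [this, stmt_8_vol_singleton]

lemma stmt_8_key (f f' : unitInterval → unitInterval) (hf : Measurable f)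
    (hfmp : MeasurePreserving f volume volume)
    (hf'mp : MeasurePreserving f' volume volume)
    (hinv : ∀ y, f (f' y) = y) :
    (volume : Measure (unitInterval × unitInterval)) {p | f p.1 ≤ p.2} = 1/2 := by
  set A : Set (unitInterval × unitInterval) := {p | f p.1 ≤ p.2} with hAdef
  set A' : Set (unitInterval × unitInterval) := {p | p.2 ≤ f p.1} with hA'def
  have measA : MeasurableSet A := measurableSet_le (hf.comp measurable_fst) measurable_snd
  have hφ : MeasurePreserving ((Prod.map f' f) ∘ Prod.swap)
      (volume : Measure (unitInterval × unitInterval)) volume :=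
    (hf'mp.prod hfmp).comp Measure.measurePreserving_swap
  have hpre : ((Prod.map f' f) ∘ Prod.swap) ⁻¹' A = A' := by
    ext p
    simp only [hAdef, hA'def, Set.mem_preimage, Function.comp_apply, Prod.map, Prod.swap,
      Set.mem_setOf_eq, hinv]
  have heq : volume A = volume A' := by
    rw [← hφ.measure_preimage measA.nullMeasurableSet, hpre]
  have hunion : A ∪ A' = Set.univ := by
    ext p; simp [hAdef, hA'def, le_total]
  have hinter : A ∩ A' = {p | p.2 = f p.1} := by
    ext p; constructor
    · rintro ⟨h1, h2⟩; exact le_antisymm h2 h1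
    · intro hp; exact ⟨le_of_eq hp.symm, le_of_eq hp⟩
  have hsum : volume A + volume A' = 1 := by
    have measA' : MeasurableSet A' :=
      measurableSet_le measurable_snd (hf.comp measurable_fst)
    have := measure_union_add_inter (μ := (volume : Measure (unitInterval × unitInterval))) A
      measA'
    rw [hunion, hinter, stmt_8_graph_null f hf, add_zero, measure_univ] at this
    exact this.symm
  rw [← heq, ← two_mul] at hsum
  rw [ENNReal.eq_div_iff two_ne_zero ENNReal.ofNat_ne_top]
  exact hsum

/-- For a measure-preserving bijection `h` of `[0,1]` with measurable measure-preserving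
inverse `g`, the surface area of the mutually completely dependent copula `A_h`,
`∫_{[0,1]²} √(𝟙_{[0,y]}(h x) + 𝟙_{[0,x]}(h⁻¹ y) + 1) dλ₂`, equals
`√2 - (2√2 - 1 - √3) λ₂(Ω√2)`. -/
theorem stmt_8 (h g : unitInterval → unitInterval)
    (hbij : Function.Bijective h)
    (hmp : MeasurePreserving h volume volume)
    (hgl : Function.LeftInverse g h) (hgr : Function.RightInverse g h)
    (hgmeas : Measurable g) (hgmp : MeasurePreserving g volume volume) :
    (∫ p : unitInterval × unitInterval,
        Real.sqrt ((if h p.1 ≤ p.2 then (1 : ℝ) else 0) +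
          (if g p.2 ≤ p.1 then (1 : ℝ) else 0) + 1)) =
    Real.sqrt 2 - (2 * Real.sqrt 2 - 1 - Real.sqrt 3) *
      (volume {p : unitInterval × unitInterval |
        (0 < p.1 ∧ p.1 < 1 ∧ 0 < p.2 ∧ p.2 < 1) ∧ h p.1 ≤ p.2 ∧ g p.2 ≤ p.1}).toReal := by
  set A : Set (unitInterval × unitInterval) := {p | h p.1 ≤ p.2} with hAdef
  set B : Set (unitInterval × unitInterval) := {p | g p.2 ≤ p.1} with hBdef
  set Ω : Set (unitInterval × unitInterval) := {p |
      (0 < p.1 ∧ p.1 < 1 ∧ 0 < p.2 ∧ p.2 < 1) ∧ h p.1 ≤ p.2 ∧ g p.2 ≤ p.1} with hΩdef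
  have measA : MeasurableSet A := measurableSet_le (hmp.measurable.comp measurable_fst)
    measurable_snd
  have measB : MeasurableSet B := measurableSet_le (hgmeas.comp measurable_snd) measurable_fst
  -- measures of A and B
  have hμA : volume A = 1/2 := stmt_8_key h g hmp.measurable hmp hgmp hgr
  have hμB : volume B = 1/2 := by
    have hkey := stmt_8_key g h hgmeas hgmp hmp hgl
    have hswap : Prod.swap ⁻¹' ({p : unitInterval × unitInterval | g p.1 ≤ p.2}) = B := by
      ext p; simp [hBdef]
    rw [← hkey, ← hswap]
    exact Measure.measurePreserving_swap.measure_preimage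
      ((measurableSet_le (hgmeas.comp measurable_fst) measurable_snd).nullMeasurableSet)
  -- Ω has the same measure as A ∩ B
  have hΩsub : Ω ⊆ A ∩ B := fun p hp => ⟨hp.2.1, hp.2.2⟩
  have hN : volume ((A ∩ B) \ Ω) = 0 := by
    have hsub : (A ∩ B) \ Ω ⊆
        ({p : unitInterval × unitInterval | p.1 = 0} ∪ {p | p.1 = 1}) ∪
        ({p | p.2 = 0} ∪ {p | p.2 = 1}) := by
      rintro p ⟨⟨hpA, hpB⟩, hpΩ⟩
      simp only [hΩdef, Set.mem_setOf_eq, not_and_or] at hpΩ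
      have h01 : (0 : ℝ) ≤ (p.1 : ℝ) := p.1.2.1
      have h11 : (p.1 : ℝ) ≤ 1 := p.1.2.2
      have h02 : (0 : ℝ) ≤ (p.2 : ℝ) := p.2.2.1
      have h12 : (p.2 : ℝ) ≤ 1 := p.2.2.2
      rcases hpΩ with (h1 | h1 | h1 | h1) | (h1 | h1)
      · exact Or.inl (Or.inl (le_antisymm (not_lt.mp h1) (Subtype.coe_le_coe.mp h01)))
      · exact Or.inl (Or.inr (le_antisymm (Subtype.coe_le_coe.mp h11) (not_lt.mp h1)))
      · exact Or.inr (Or.inl (le_antisymm (not_lt.mp h1) (Subtype.coe_le_coe.mp h02)))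
      · exact Or.inr (Or.inr (le_antisymm (Subtype.coe_le_coe.mp h12) (not_lt.mp h1)))
      · exact absurd hpA h1
      · exact absurd hpB h1
    refine measure_mono_null hsub ?_
    have h1 : ∀ a : unitInterval,
        (volume : Measure (unitInterval × unitInterval)) {p | p.1 = a} = 0 := by
      intro a
      have : {p : unitInterval × unitInterval | p.1 = a} = ({a} : Set unitInterval) ×ˢ univ := by
        ext p; exact ⟨fun hp => ⟨hp, trivial⟩, fun hp => hp.1⟩
      rw [show (volume : Measure (unitInterval × unitInterval)) =
        (volume : Measure unitInterval).prod volume from rfl, this, Measure.prod_prod,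
        stmt_8_vol_singleton, zero_mul]
    have h2 : ∀ a : unitInterval,
        (volume : Measure (unitInterval × unitInterval)) {p | p.2 = a} = 0 := by
      intro a
      have : {p : unitInterval × unitInterval | p.2 = a} = (univ : Set unitInterval) ×ˢ {a} := by
        ext p; exact ⟨fun hp => ⟨trivial, hp⟩, fun hp => hp.2⟩
      rw [show (volume : Measure (unitInterval × unitInterval)) =
        (volume : Measure unitInterval).prod volume from rfl, this, Measure.prod_prod,
        stmt_8_vol_singleton, mul_zero]
    refine measure_union_null (measure_union_null (h1 0) (h1 1))
      (measure_union_null (h2 0) (h2 1))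
  have hμΩ : volume Ω = volume (A ∩ B) := by
    refine le_antisymm (measure_mono hΩsub) ?_
    calc volume (A ∩ B) ≤ volume (Ω ∪ ((A ∩ B) \ Ω)) := by
          refine measure_mono fun p hp => ?_
          by_cases hpΩ : p ∈ Ω
          · exact Or.inl hpΩ
          · exact Or.inr ⟨hp, hpΩ⟩
      _ ≤ volume Ω + volume ((A ∩ B) \ Ω) := measure_union_le _ _
      _ = volume Ω := by rw [hN, add_zero]
  -- rewrite the integrand
  have hpt : ∀ p : unitInterval × unitInterval,
      Real.sqrt ((if h p.1 ≤ p.2 then (1 : ℝ) else 0) +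
        (if g p.2 ≤ p.1 then (1 : ℝ) else 0) + 1) =
      (1 : ℝ) + A.indicator (fun _ => Real.sqrt 2 - 1) p
        + B.indicator (fun _ => Real.sqrt 2 - 1) p
        + (A ∩ B).indicator (fun _ => Real.sqrt 3 - 2 * Real.sqrt 2 + 1) p := by
    intro p
    by_cases hpA : h p.1 ≤ p.2 <;> by_cases hpB : g p.2 ≤ p.1
    · rw [if_pos hpA, if_pos hpB, Set.indicator_of_mem (show p ∈ A from hpA),
        Set.indicator_of_mem (show p ∈ B from hpB),
        Set.indicator_of_mem (show p ∈ A ∩ B from ⟨hpA, hpB⟩),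
        show (1:ℝ) + 1 + 1 = 3 by norm_num]
      ring
    · rw [if_pos hpA, if_neg hpB, Set.indicator_of_mem (show p ∈ A from hpA),
        Set.indicator_of_notMem (show p ∉ B from hpB),
        Set.indicator_of_notMem (show p ∉ A ∩ B from fun hc => hpB hc.2),
        show (1:ℝ) + 0 + 1 = 2 by norm_num]
      ring
    · rw [if_neg hpA, if_pos hpB, Set.indicator_of_notMem (show p ∉ A from hpA),
        Set.indicator_of_mem (show p ∈ B from hpB),
        Set.indicator_of_notMem (show p ∉ A ∩ B from fun hc => hpA hc.1),
        show (0:ℝ) + 1 + 1 = 2 by norm_num]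
      ring
    · rw [if_neg hpA, if_neg hpB, Set.indicator_of_notMem (show p ∉ A from hpA),
        Set.indicator_of_notMem (show p ∉ B from hpB),
        Set.indicator_of_notMem (show p ∉ A ∩ B from fun hc => hpA hc.1),
        show (0:ℝ) + 0 + 1 = 1 by norm_num, Real.sqrt_one]
      ring
  rw [show (fun p : unitInterval × unitInterval =>
      Real.sqrt ((if h p.1 ≤ p.2 then (1 : ℝ) else 0) +
        (if g p.2 ≤ p.1 then (1 : ℝ) else 0) + 1)) = _ from funext hpt]
  have intA : Integrable (A.indicator fun _ => Real.sqrt 2 - 1)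
      (volume : Measure (unitInterval × unitInterval)) :=
    (integrable_const _).indicator measA
  have intB : Integrable (B.indicator fun _ => Real.sqrt 2 - 1)
      (volume : Measure (unitInterval × unitInterval)) :=
    (integrable_const _).indicator measB
  have intAB : Integrable ((A ∩ B).indicator fun _ => Real.sqrt 3 - 2 * Real.sqrt 2 + 1)
      (volume : Measure (unitInterval × unitInterval)) :=
    (integrable_const _).indicator (measA.inter measB)
  have i0 : Integrable (fun _ : unitInterval × unitInterval => (1 : ℝ)) volume :=
    integrable_const 1
  have i1 : Integrable (fun p : unitInterval × unitInterval =>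
      (1 : ℝ) + A.indicator (fun _ => Real.sqrt 2 - 1) p) volume := i0.add intA
  have i2 : Integrable (fun p : unitInterval × unitInterval =>
      (1 : ℝ) + A.indicator (fun _ => Real.sqrt 2 - 1) p
        + B.indicator (fun _ => Real.sqrt 2 - 1) p) volume := i1.add intB
  rw [integral_add i2 intAB, integral_add i1 intB, integral_add i0 intA,
    integral_const, integral_indicator_const _ measA, integral_indicator_const _ measB,
    integral_indicator_const _ (measA.inter measB), measureReal_def, measureReal_def,
    measureReal_def, measureReal_def, measure_univ, hμA, hμB, ← hμΩ]
  have htr : ((1 : ENNReal)/2).toReal = (1:ℝ)/2 := by simp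
  rw [htr]
  simp only [smul_eq_mul, ENNReal.toReal_one]
  ring
end
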